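/- Let a_1 ≤ a_2, K = [a_1,a_2], φ(t) = (t, t², t³), L = φ(K) ⊆ ℝ³, and Λ = convexHull(L). Let c, q ∈ ℝ³ and suppose there exists ε ∈ {+1,−1} such that for all t, s ∈ K with s ≠ t, ε · (φ′(t) × (c × q)) · (φ(s) − φ(t)) > 0, where × denotes the cross product in ℝ³ and φ′(t) = (1, 2t, 3t²). Then for every t ∈ K and every v ∈ Λ with v ≠ φ(t) and q·(v − φ(t)) = 0, one has c·(v − φ(t)) ≠ 0. -/

import Mathlib

open Matrix

lemma dot_sum {ι : Type} (F : Finset ι) (u : Fin 3 → ℝ) (f : ι → Fin 3 → ℝ) :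
    u ⬝ᵥ (∑ i ∈ F, f i) = ∑ i ∈ F, u ⬝ᵥ f i := by
  simp only [dotProduct, Finset.sum_apply, Finset.mul_sum]
  rw [Finset.sum_comm]

lemma triple_dot (a b u x : Fin 3 → ℝ) :
    (a ⨯₃ (b ⨯₃ u)) ⬝ᵥ x = (a ⬝ᵥ u) * (b ⬝ᵥ x) - (a ⬝ᵥ b) * (u ⬝ᵥ x) := by
  simp [crossProduct, dotProduct, Fin.sum_univ_three]
  ring

theorem stmt_13
    (a1 a2 : ℝ) (ha : a1 ≤ a2)
    (φ φ' : ℝ → Fin 3 → ℝ)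
    (hφ : φ = fun t => ![t, t ^ 2, t ^ 3])
    (hφ' : φ' = fun t => ![1, 2 * t, 3 * t ^ 2])
    (c q : Fin 3 → ℝ)
    (hsign : ∃ ε : ℝ, (ε = 1 ∨ ε = -1) ∧
      ∀ t ∈ Set.Icc a1 a2, ∀ s ∈ Set.Icc a1 a2, s ≠ t →
        0 < ε * ((φ' t ⨯₃ (c ⨯₃ q)) ⬝ᵥ (φ s - φ t))) :
    ∀ t ∈ Set.Icc a1 a2, ∀ v ∈ convexHull ℝ (φ '' Set.Icc a1 a2),
      v ≠ φ t → q ⬝ᵥ (v - φ t) = 0 → c ⬝ᵥ (v - φ t) ≠ 0 := by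
  obtain ⟨ε, hε, hpos⟩ := hsign
  intro t ht v hv hne hq hc
  set W := φ' t ⨯₃ (c ⨯₃ q) with hW
  -- orthogonality forces W ⬝ᵥ (v - φ t) = 0
  have hWx : W ⬝ᵥ (v - φ t) = 0 := by
    rw [hW, triple_dot, hq, hc]; ring
  -- but convexity forces ε * (W ⬝ᵥ (v - φ t)) > 0
  rw [convexHull_eq] at hv
  obtain ⟨ι, F, w, z, hw0, hw1, hz, hcm⟩ := hv
  rw [Finset.centerMass_eq_of_sum_1 _ _ hw1] at hcm
  have hvsub : v - φ t = ∑ i ∈ F, w i • (z i - φ t) := by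
    rw [← hcm]
    simp [smul_sub, Finset.sum_sub_distrib, ← Finset.sum_smul, hw1]
  have key : 0 < ε * (W ⬝ᵥ (v - φ t)) := by
    have hterm : ∀ i ∈ F, 0 ≤ w i * (ε * (W ⬝ᵥ (z i - φ t))) := by
      intro i hi
      obtain ⟨s, hs, hzs⟩ := hz i hi
      rcases eq_or_ne s t with rfl | hst
      · simp [← hzs]
      · rw [← hzs]
        exact mul_nonneg (hw0 i hi) (le_of_lt (hpos t ht s hs hst))
    have hsum : ε * (W ⬝ᵥ (v - φ t)) = ∑ i ∈ F, w i * (ε * (W ⬝ᵥ (z i - φ t))) := by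
      rw [hvsub, dot_sum, Finset.mul_sum]
      refine Finset.sum_congr rfl fun i hi => ?_
      rw [dotProduct_smul, smul_eq_mul]
      ring
    rw [hsum]
    -- strict: not all terms zero, since otherwise v = φ t
    by_contra h
    push_neg at h
    have hzero : ∀ i ∈ F, w i * (ε * (W ⬝ᵥ (z i - φ t))) = 0 := by
      intro i hi
      by_contra hne0
      have hlt : 0 < w i * (ε * (W ⬝ᵥ (z i - φ t))) :=
        lt_of_le_of_ne (hterm i hi) (Ne.symm hne0)
      have hlt' := Finset.sum_lt_sum (f := fun _ => (0:ℝ))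
        (g := fun i => w i * (ε * W ⬝ᵥ (z i - φ t))) hterm ⟨i, hi, hlt⟩
      rw [Finset.sum_const, smul_zero] at hlt'
      exact absurd hlt' (not_lt.2 h)
    -- each i: either w i = 0 or z i = φ t
    have hall : ∀ i ∈ F, w i • (z i - φ t) = 0 := by
      intro i hi
      obtain ⟨s, hs, hzs⟩ := hz i hi
      rcases eq_or_ne s t with rfl | hst
      · simp [← hzs]
      · have hp := hpos t ht s hs hst
        have := hzero i hi
        rw [← hzs] at this ⊢
        have hwi : w i = 0 := by
          rcases mul_eq_zero.1 this with h' | h'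
          · exact h'
          · exact absurd h' (ne_of_gt hp)
        simp [hwi]
    have : v - φ t = 0 := by
      rw [hvsub]
      exact Finset.sum_eq_zero hall
    exact hne (sub_eq_zero.1 this)
  rw [hWx, mul_zero] at key
  exact lt_irrefl 0 key
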